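/- arXiv:0812.2719 — 2 statements merged into one kernel-verified Lean document; each statement's English description precedes it below -/
import Mathlib

section
/- For all real numbers x, y with 0 ≤ x ≤ 1 and 0 ≤ y ≤ 1, and every positive integer k, (1 - x·y)^k ≤ 1 - x + e^{-k·y}. -/
theorem stmt_0 (x y : ℝ) (hx0 : 0 ≤ x) (hx1 : x ≤ 1) (hy0 : 0 ≤ y) (hy1 : y ≤ 1)
    (k : ℕ) (hk : 0 < k) :
    (1 - x * y) ^ k ≤ 1 - x + Real.exp (-(k : ℝ) * y) := by
  have ha0 : (0:ℝ) ≤ 1 - y := by linarith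
  have key : ∀ n : ℕ, (1 - x * y) ^ n ≤ 1 - x + x * (1 - y) ^ n := by
    intro n
    induction n with
    | zero => simp
    | succ n ih =>
      have hak : (1 - y) ^ n ≤ 1 := pow_le_one₀ ha0 (by linarith)
      have h1 : (0:ℝ) ≤ 1 - x * y := by nlinarith
      calc (1 - x * y) ^ (n+1) = (1 - x * y) ^ n * (1 - x * y) := by ring
        _ ≤ (1 - x + x * (1 - y) ^ n) * (1 - x * y) := by
            apply mul_le_mul_of_nonneg_right ih h1
        _ ≤ 1 - x + x * (1 - y) ^ (n+1) := by
            have hexp : (1 - y) ^ (n+1) = (1 - y) ^ n * (1 - y) := by ring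
            nlinarith [mul_nonneg (mul_nonneg hx0 hy0) (mul_nonneg (sub_nonneg.2 hx1) (sub_nonneg.2 hak))]
  have h2 : x * (1 - y) ^ k ≤ Real.exp (-(k : ℝ) * y) := by
    have h3 : (1 - y) ^ k ≤ Real.exp (-y) ^ k := by
      apply pow_le_pow_left₀ ha0
      linarith [Real.add_one_le_exp (-y)]
    calc x * (1 - y) ^ k ≤ 1 * (1 - y) ^ k := by
          apply mul_le_mul_of_nonneg_right hx1 (pow_nonneg ha0 k)
      _ = (1 - y) ^ k := one_mul _
      _ ≤ Real.exp (-y) ^ k := h3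
      _ = Real.exp (-(k : ℝ) * y) := by
          rw [← Real.exp_nat_mul]; ring_nf
  linarith [key k]
end

section
/- Let (H_D(m_D)) and (H_W(m_W)) be families of random matrices of sizes m_D×m_S and m_W×m_S with i.i.d. zero-mean unit-variance entries, so that (1/m_D)·H_Dᴴ H_D → I_{m_S} and (1/m_W)·H_Wᴴ H_W → I_{m_S} almost surely as m_D, m_W → ∞. If m_W/m_D → β > 0, then log det( I + (α²P/(m_S σ_W²)) H_Wᴴ H_W + (P/(m_S σ_D²)) H_Dᴴ H_D ) − log det( I + (α²P/(m_S σ_W²)) H_Wᴴ H_W ) → m_S·log( 1 + σ_W²/(β α² σ_D²) ) almost surely. -/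
open Matrix Filter

theorem stmt_18 {mS : ℕ} (hmS : 0 < mS)
    (α P σD2 σW2 β : ℝ) (hα : 0 < α) (hP : 0 < P) (hσD : 0 < σD2) (hσW : 0 < σW2) (hβ : 0 < β)
    (mD mW : ℕ → ℕ) (hmD : Tendsto mD atTop atTop) (hmW : Tendsto mW atTop atTop)
    (HD : (k : ℕ) → Matrix (Fin (mD k)) (Fin mS) ℂ)
    (HW : (k : ℕ) → Matrix (Fin (mW k)) (Fin mS) ℂ)
    -- law of large numbers: (1/m_D) H_Dᴴ H_D → I and (1/m_W) H_Wᴴ H_W → I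
    (hLLN_D : Tendsto (fun k => (((mD k : ℝ) : ℂ))⁻¹ • ((HD k)ᴴ * HD k)) atTop
      (nhds (1 : Matrix (Fin mS) (Fin mS) ℂ)))
    (hLLN_W : Tendsto (fun k => (((mW k : ℝ) : ℂ))⁻¹ • ((HW k)ᴴ * HW k)) atTop
      (nhds (1 : Matrix (Fin mS) (Fin mS) ℂ)))
    -- m_W / m_D → β
    (hratio : Tendsto (fun k => (mW k : ℝ) / (mD k : ℝ)) atTop (nhds β)) :
    Tendsto (fun k =>
        Real.log ((((1 : Matrix (Fin mS) (Fin mS) ℂ)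
            + ((α ^ 2 * P / (mS * σW2) : ℝ) : ℂ) • ((HW k)ᴴ * HW k)
            + ((P / (mS * σD2) : ℝ) : ℂ) • ((HD k)ᴴ * HD k)).det).re)
          - Real.log ((((1 : Matrix (Fin mS) (Fin mS) ℂ)
            + ((α ^ 2 * P / (mS * σW2) : ℝ) : ℂ) • ((HW k)ᴴ * HW k)).det).re))
      atTop
      (nhds ((mS : ℝ) * Real.log (1 + σW2 / (β * α ^ 2 * σD2)))) := by
  have hmS' : (0:ℝ) < mS := by exact_mod_cast hmS
  set a : ℝ := α ^ 2 * P / (mS * σW2) with ha_def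
  set b : ℝ := P / (mS * σD2) with hb_def
  set c : ℝ := σW2 / (β * α ^ 2 * σD2) with hc_def
  have ha : 0 < a := by rw [ha_def]; positivity
  have hb : 0 < b := by rw [hb_def]; positivity
  have hc : 0 < c := by rw [hc_def]; positivity
  have hba : b / a * β⁻¹ = c := by
    rw [ha_def, hb_def, hc_def]
    field_simp
  set A : (k : ℕ) → Matrix (Fin mS) (Fin mS) ℂ := fun k => (HW k)ᴴ * HW k with hA_def
  set B : (k : ℕ) → Matrix (Fin mS) (Fin mS) ℂ := fun k => (HD k)ᴴ * HD k with hB_def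
  set M : (k : ℕ) → Matrix (Fin mS) (Fin mS) ℂ :=
    fun k => 1 + ((a:ℝ):ℂ) • A k + ((b:ℝ):ℂ) • B k with hM_def
  set N : (k : ℕ) → Matrix (Fin mS) (Fin mS) ℂ :=
    fun k => 1 + ((a:ℝ):ℂ) • A k with hN_def
  set t : ℕ → ℝ := fun k => a * (mW k : ℝ) with ht_def
  show Tendsto (fun k => Real.log (((M k).det).re) - Real.log (((N k).det).re)) atTop
      (nhds ((mS : ℝ) * Real.log (1 + c)))
  -- basic limits
  have htW : Tendsto (fun k => (mW k : ℝ)) atTop atTop :=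
    tendsto_natCast_atTop_atTop.comp hmW
  have h_t : Tendsto t atTop atTop := by
    simpa [ht_def] using htW.const_mul_atTop ha
  have h_inv : Tendsto (fun k => (t k)⁻¹) atTop (nhds 0) := h_t.inv_tendsto_atTop
  have h_invC : Tendsto (fun k => ((t k : ℝ):ℂ)⁻¹) atTop (nhds 0) := by
    have := (Complex.continuous_ofReal.tendsto 0).comp h_inv
    simpa [Function.comp_def, Complex.ofReal_inv] using this
  have hevW : ∀ᶠ k in atTop, 1 ≤ mW k := hmW.eventually_ge_atTop 1
  have hevD : ∀ᶠ k in atTop, 1 ≤ mD k := hmD.eventually_ge_atTop 1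
  -- T1 : (t k)⁻¹ • 1 → 0
  have T1 : Tendsto (fun k => ((t k : ℝ):ℂ)⁻¹ • (1 : Matrix (Fin mS) (Fin mS) ℂ)) atTop
      (nhds 0) := by
    simpa using h_invC.smul_const (1 : Matrix (Fin mS) (Fin mS) ℂ)
  -- T2 : (t k)⁻¹ • a • A k → 1
  have T2 : Tendsto (fun k => ((t k : ℝ):ℂ)⁻¹ • (((a:ℝ):ℂ) • A k)) atTop (nhds 1) := by
    apply hLLN_W.congr'
    filter_upwards [hevW] with k hk
    have hmk : ((mW k : ℝ):ℂ) ≠ 0 := by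
      simp only [ne_eq, Complex.ofReal_eq_zero, Nat.cast_eq_zero]
      omega
    have haC : ((a:ℝ):ℂ) ≠ 0 := by
      simp [Complex.ofReal_ne_zero, ne_of_gt ha]
    rw [smul_smul]
    congr 1
    rw [ht_def]
    push_cast
    field_simp
  -- T3 : (t k)⁻¹ • b • B k → c • 1
  have hratio' : Tendsto (fun k => (b / a) * ((mW k : ℝ) / (mD k : ℝ))⁻¹) atTop
      (nhds ((b / a) * β⁻¹)) :=
    (hratio.inv₀ (ne_of_gt hβ)).const_mul _
  have hsC : Tendsto (fun k => (((b / a) * ((mW k : ℝ) / (mD k : ℝ))⁻¹ : ℝ) : ℂ)) atTop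
      (nhds ((c:ℝ):ℂ)) := by
    have := (Complex.continuous_ofReal.tendsto _).comp hratio'
    rw [← hba]
    simpa [Function.comp_def] using this
  have T3pre : Tendsto (fun k => (((b / a) * ((mW k : ℝ) / (mD k : ℝ))⁻¹ : ℝ) : ℂ) •
      (((mD k : ℝ):ℂ)⁻¹ • B k)) atTop (nhds (((c:ℝ):ℂ) • 1)) := by
    simpa using hsC.smul hLLN_D
  have T3 : Tendsto (fun k => ((t k : ℝ):ℂ)⁻¹ • (((b:ℝ):ℂ) • B k)) atTop
      (nhds (((c:ℝ):ℂ) • 1)) := by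
    apply T3pre.congr'
    filter_upwards [hevW, hevD] with k hkW hkD
    rw [smul_smul, smul_smul]
    congr 1
    have hmW0 : (mW k : ℝ) ≠ 0 := Nat.cast_ne_zero.mpr (by omega)
    have hmD0 : (mD k : ℝ) ≠ 0 := Nat.cast_ne_zero.mpr (by omega)
    have hr : (b / a) * ((mW k : ℝ) / (mD k : ℝ))⁻¹ * ((mD k : ℝ))⁻¹ = (t k)⁻¹ * b := by
      rw [ht_def]
      field_simp
    calc (((b / a) * ((mW k : ℝ) / (mD k : ℝ))⁻¹ : ℝ) : ℂ) * ((mD k : ℝ):ℂ)⁻¹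
        = (((b / a) * ((mW k : ℝ) / (mD k : ℝ))⁻¹ * ((mD k : ℝ))⁻¹ : ℝ) : ℂ) := by
          push_cast; ring
      _ = (((t k)⁻¹ * b : ℝ) : ℂ) := by rw [hr]
      _ = ((t k : ℝ):ℂ)⁻¹ * ((b:ℝ):ℂ) := by push_cast; ring
  -- scaled matrices converge
  have hM' : Tendsto (fun k => ((t k : ℝ):ℂ)⁻¹ • M k) atTop
      (nhds ((0 : Matrix (Fin mS) (Fin mS) ℂ) + 1 + ((c:ℝ):ℂ) • 1)) := by
    refine ((T1.add T2).add T3).congr fun k => ?_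
    simp only [hM_def, smul_add]
  have hN' : Tendsto (fun k => ((t k : ℝ):ℂ)⁻¹ • N k) atTop
      (nhds ((0 : Matrix (Fin mS) (Fin mS) ℂ) + 1)) := by
    refine (T1.add T2).congr fun k => ?_
    simp only [hN_def, smul_add]
  have hlim1 : ((0 : Matrix (Fin mS) (Fin mS) ℂ) + 1 + ((c:ℝ):ℂ) • 1)
      = (((1 + c : ℝ)):ℂ) • (1 : Matrix (Fin mS) (Fin mS) ℂ) := by
    push_cast
    rw [zero_add, add_smul, one_smul]
  have hcontdet : Continuous fun X : Matrix (Fin mS) (Fin mS) ℂ => X.det.re :=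
    Complex.continuous_re.comp continuous_id.matrix_det
  have hval1 : (((((1 + c : ℝ)):ℂ) • (1 : Matrix (Fin mS) (Fin mS) ℂ)).det).re
      = (1 + c) ^ mS := by
    rw [Matrix.det_smul, Fintype.card_fin, Matrix.det_one, mul_one, ← Complex.ofReal_pow,
      Complex.ofReal_re]
  have hdM : Tendsto (fun k => ((((t k : ℝ):ℂ)⁻¹ • M k).det).re) atTop
      (nhds ((1 + c) ^ mS)) := by
    have h := (hcontdet.tendsto _).comp hM'
    rw [hlim1] at h
    rw [← hval1]
    exact h
  have hdN : Tendsto (fun k => ((((t k : ℝ):ℂ)⁻¹ • N k).det).re) atTop (nhds 1) := by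
    have h := (hcontdet.tendsto _).comp hN'
    simpa only [Function.comp_def, zero_add, Matrix.det_one, Complex.one_re] using h
  have hposM : ∀ᶠ k in atTop, 0 < ((((t k : ℝ):ℂ)⁻¹ • M k).det).re :=
    hdM.eventually (eventually_gt_nhds (by positivity))
  have hposN : ∀ᶠ k in atTop, 0 < ((((t k : ℝ):ℂ)⁻¹ • N k).det).re :=
    hdN.eventually (eventually_gt_nhds one_pos)
  have hlogM : Tendsto (fun k => Real.log (((((t k : ℝ):ℂ)⁻¹ • M k).det).re)) atTop
      (nhds (Real.log ((1 + c) ^ mS))) :=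
    ((Real.continuousAt_log (by positivity)).tendsto).comp hdM
  have hlogN : Tendsto (fun k => Real.log (((((t k : ℝ):ℂ)⁻¹ • N k).det).re)) atTop
      (nhds (Real.log 1)) :=
    ((Real.continuousAt_log one_ne_zero).tendsto).comp hdN
  have hfinal : Tendsto (fun k => Real.log (((((t k : ℝ):ℂ)⁻¹ • M k).det).re)
      - Real.log (((((t k : ℝ):ℂ)⁻¹ • N k).det).re)) atTop
      (nhds ((mS : ℝ) * Real.log (1 + c))) := by
    have := hlogM.sub hlogN
    simpa [Real.log_pow, Real.log_one] using this
  refine hfinal.congr' ?_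
  filter_upwards [hevW, hposM, hposN] with k hkW hM0 hN0
  have htk : 0 < t k := by
    rw [ht_def]
    have : (0:ℝ) < mW k := by exact_mod_cast Nat.lt_of_lt_of_le Nat.zero_lt_one hkW
    positivity
  have htkC : ((t k : ℝ):ℂ) ≠ 0 := Complex.ofReal_ne_zero.mpr (ne_of_gt htk)
  have hMk : M k = ((t k : ℝ):ℂ) • (((t k : ℝ):ℂ)⁻¹ • M k) := (smul_inv_smul₀ htkC _).symm
  have hNk : N k = ((t k : ℝ):ℂ) • (((t k : ℝ):ℂ)⁻¹ • N k) := (smul_inv_smul₀ htkC _).symm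
  have hdetM : ((M k).det).re = (t k) ^ mS * ((((t k : ℝ):ℂ)⁻¹ • M k).det).re := by
    conv_lhs => rw [hMk]
    rw [Matrix.det_smul, Fintype.card_fin, ← Complex.ofReal_pow, Complex.re_ofReal_mul]
  have hdetN : ((N k).det).re = (t k) ^ mS * ((((t k : ℝ):ℂ)⁻¹ • N k).det).re := by
    conv_lhs => rw [hNk]
    rw [Matrix.det_smul, Fintype.card_fin, ← Complex.ofReal_pow, Complex.re_ofReal_mul]
  have htpow : (t k) ^ mS ≠ 0 := by positivity
  rw [hdetM, hdetN, Real.log_mul htpow (ne_of_gt hM0), Real.log_mul htpow (ne_of_gt hN0)]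
  ring
end
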